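/- The function (ψ, z) ↦ ψ − 2 Im(log(1 − z e^{iψ}) − log(1 − z)) is nonnegative on [0, 2π) × D, where D is the open unit complex disk. -/

import Mathlib

private lemma phase_key (θ : ℝ) (z : ℂ) :
    ((1 - z * Complex.exp (Complex.I * ((2*θ : ℝ) : ℂ))) * (starRingEnd ℂ (1 - z)) *
      Complex.exp (-(Complex.I * (θ : ℂ)))).im
      = (‖z‖ ^ 2 - 1) * Real.sin θ := by
  rw [Complex.sq_norm]
  simp [Complex.ext_iff, Complex.exp_re, Complex.exp_im, Complex.normSq_apply,
    Real.sin_two_mul, Real.cos_two_mul]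
  linear_combination (-2 * Real.cos θ * z.im) * (Real.sin_sq_add_cos_sq θ)

private lemma phase_polar (a b : ℂ) (θ : ℝ) (ha : a ≠ 0) (hb : b ≠ 0) :
    (a * (starRingEnd ℂ b) * Complex.exp (-(Complex.I * (θ : ℂ)))).im
      = ‖a‖ * ‖b‖ * Real.sin (a.arg - b.arg - θ) := by
  nth_rewrite 1 [← Complex.norm_mul_exp_arg_mul_I a]
  nth_rewrite 1 [← Complex.norm_mul_exp_arg_mul_I b]
  rw [map_mul, ← Complex.exp_conj]
  have h1 : (starRingEnd ℂ) ((↑b.arg) * Complex.I) = -((↑b.arg) * Complex.I) := by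
    simp [Complex.ext_iff]
  rw [h1, Complex.conj_ofReal]
  have he : Complex.exp (↑a.arg * Complex.I) * Complex.exp (-(↑b.arg * Complex.I)) *
      Complex.exp (-(Complex.I * (θ : ℂ)))
      = Complex.exp (((a.arg - b.arg - θ : ℝ) : ℂ) * Complex.I) := by
    rw [← Complex.exp_add, ← Complex.exp_add]
    push_cast
    ring_nf
  have h2 : (↑(‖a‖) * Complex.exp (↑a.arg * Complex.I)) *
      (↑(‖b‖) * Complex.exp (-(↑b.arg * Complex.I))) *
      Complex.exp (-(Complex.I * (θ : ℂ)))
      = ↑(‖a‖ * ‖b‖) *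
        Complex.exp (((a.arg - b.arg - θ : ℝ) : ℂ) * Complex.I) := by
    rw [Complex.ofReal_mul, ← he]
    ring
  rw [h2, Complex.im_ofReal_mul, Complex.exp_ofReal_mul_I_im]

/-- The function `(ψ, z) ↦ ψ − 2 Im(log(1 − z e^{iψ}) − log(1 − z))` is nonnegative on
`[0, 2π) × 𝔻`, where `𝔻` is the open unit disk. -/
theorem phase_increment_nonneg (ψ : ℝ) (hψ : ψ ∈ Set.Ico (0 : ℝ) (2 * Real.pi))
    (z : ℂ) (hz : ‖z‖ < 1) :
    0 ≤ ψ - 2 * ((Complex.log (1 - z * Complex.exp (Complex.I * (ψ : ℂ)))).im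
      - (Complex.log (1 - z)).im) := by
  rw [Complex.log_im, Complex.log_im]
  rcases eq_or_lt_of_le hψ.1 with h0 | h0
  · simp [← h0]
  · have hπ := Real.pi_pos
    have hθ0 : 0 < ψ / 2 := by linarith
    have hθπ : ψ / 2 < Real.pi := by linarith [hψ.2]
    have habs : ‖z * Complex.exp (Complex.I * (ψ : ℂ))‖ < 1 := by
      rw [norm_mul, Complex.norm_exp]
      simpa using hz
    set a : ℂ := 1 - z * Complex.exp (Complex.I * (ψ : ℂ)) with ha_def
    set b : ℂ := 1 - z with hb_def
    have hre : ∀ w : ℂ, ‖w‖ < 1 → 0 < (1 - w).re := by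
      intro w hw
      have h1 : w.re ≤ ‖w‖ := Complex.re_le_norm w
      simp only [Complex.sub_re, Complex.one_re]
      linarith
    have hra : 0 < a.re := hre _ habs
    have hrb : 0 < b.re := hre _ hz
    have ha0 : a ≠ 0 := fun h => by simp [h] at hra
    have hb0 : b ≠ 0 := fun h => by simp [h] at hrb
    have harga : |a.arg| < Real.pi / 2 :=
      Complex.abs_arg_lt_pi_div_two_iff.2 (Or.inl hra)
    have hargb : |b.arg| < Real.pi / 2 :=
      Complex.abs_arg_lt_pi_div_two_iff.2 (Or.inl hrb)
    have hkey : (a * (starRingEnd ℂ b) * Complex.exp (-(Complex.I * ((ψ/2 : ℝ) : ℂ)))).im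
        = (‖z‖ ^ 2 - 1) * Real.sin (ψ/2) := by
      have h2 : (2 * (ψ/2) : ℝ) = ψ := by ring
      have := phase_key (ψ/2) z
      rw [h2] at this
      exact this
    rw [phase_polar a b (ψ/2) ha0 hb0] at hkey
    have hsin : Real.sin (a.arg - b.arg - ψ/2) < 0 := by
      have hA : 0 < ‖a‖ := norm_pos_iff.mpr ha0
      have hB : 0 < ‖b‖ := norm_pos_iff.mpr hb0
      have hz2 : ‖z‖ ^ 2 - 1 < 0 := by nlinarith [norm_nonneg z]
      have hsθ : 0 < Real.sin (ψ/2) := Real.sin_pos_of_pos_of_lt_pi hθ0 hθπ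
      by_contra h
      push_neg at h
      have h1 : 0 ≤ ‖a‖ * ‖b‖ * Real.sin (a.arg - b.arg - ψ/2) :=
        mul_nonneg (mul_pos hA hB).le h
      have h2 : (‖z‖ ^ 2 - 1) * Real.sin (ψ/2) < 0 :=
        mul_neg_of_neg_of_pos hz2 hsθ
      linarith
    have ht : a.arg - b.arg - ψ/2 < 0 := by
      by_contra h
      push_neg at h
      have h1 : a.arg - b.arg - ψ/2 ≤ Real.pi := by
        have := abs_lt.mp harga
        have := abs_lt.mp hargb
        linarith
      exact absurd (Real.sin_nonneg_of_nonneg_of_le_pi h h1) (not_le.mpr hsin)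
    linarith
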